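/- Let s ∈ (1/2, 1) and let g(z) = Γ(2s−z) Γ(z+1)/Γ(2s) − sin(π(s−z))/sin(πs). Then there exists M > 0 (possibly depending on s) such that g has no zeros in the region {z ∈ ℂ : Re z ∈ (2s−1, s+1/2) and Im z ∈ [0,M]}. -/

import Mathlib

/-!
STATEMENT 14: For s ∈ (1/2, 1), with g(z) = Γ(2s−z)Γ(z+1)/Γ(2s) − sin(π(s−z))/sin(πs),
there exists M > 0 such that g has no zeros in
{z ∈ ℂ : Re z ∈ (2s−1, s+1/2), Im z ∈ [0, M]}.
-/

noncomputable def gFun (s : ℝ) (z : ℂ) : ℂ :=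
  Complex.Gamma (2 * s - z) * Complex.Gamma (z + 1) / Complex.Gamma (2 * s) -
    Complex.sin (Real.pi * (s - z)) / Complex.sin (Real.pi * s)

open Filter Topology

/-- Key Gamma inequality, via log-convexity of `Γ` and the fact that
`log Γ(2s−x) + log Γ(x+1)` takes the value `log Γ(2s)` at both `x = 0` and `x = 2s−1`. -/
lemma gamma_prod_ge (s x : ℝ) (hs1 : 1/2 < s) (hs2 : s < 1)
    (hx1 : 2*s - 1 < x) (hx2 : x < s + 1/2) :
    Real.Gamma (2*s) ≤ Real.Gamma (2*s - x) * Real.Gamma (x+1) := by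
  have hx0 : 0 < x := by linarith
  set a : ℝ := (x - (2*s-1))/x with ha
  set b : ℝ := (2*s-1)/x with hb
  have hab : a + b = 1 := by rw [ha, hb]; field_simp; ring
  have ha0 : 0 ≤ a := div_nonneg (by linarith) hx0.le
  have hb0 : 0 < b := div_pos (by linarith) hx0
  have h2s : (2*s : ℝ) ∈ Set.Ioi (0:ℝ) := Set.mem_Ioi.mpr (by linarith)
  have h2sx : (2*s - x : ℝ) ∈ Set.Ioi (0:ℝ) := Set.mem_Ioi.mpr (by linarith)
  have h1 : (1:ℝ) ∈ Set.Ioi (0:ℝ) := Set.mem_Ioi.mpr one_pos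
  have hx1' : (x+1 : ℝ) ∈ Set.Ioi (0:ℝ) := Set.mem_Ioi.mpr (by linarith)
  have c1 := Real.convexOn_log_Gamma.2 h2s h2sx ha0 hb0.le hab
  have c2 := Real.convexOn_log_Gamma.2 h1 hx1' ha0 hb0.le hab
  simp only [smul_eq_mul, Function.comp_apply] at c1 c2
  have e1 : a * (2*s) + b * (2*s - x) = 1 := by rw [ha, hb]; field_simp; ring
  have e2 : a * 1 + b * (x+1) = 2*s := by rw [ha, hb]; field_simp; ring
  rw [e1] at c1
  rw [e2] at c2
  rw [Real.Gamma_one, Real.log_one] at c1 c2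
  have hA : a = 1 - b := by linarith
  rw [hA] at c1
  have h4 : b * Real.log (Real.Gamma (2*s)) ≤
      b * (Real.log (Real.Gamma (2*s-x)) + Real.log (Real.Gamma (x+1))) := by nlinarith
  have key := (mul_le_mul_iff_right₀ hb0).mp h4
  have hg1 : 0 < Real.Gamma (2*s) := Real.Gamma_pos_of_pos (by linarith)
  have hg2 : 0 < Real.Gamma (2*s-x) := Real.Gamma_pos_of_pos (by linarith)
  have hg3 : 0 < Real.Gamma (x+1) := Real.Gamma_pos_of_pos (by linarith)
  rw [← Real.log_mul hg2.ne' hg3.ne'] at key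
  exact (Real.log_le_log_iff hg1 (by positivity)).mp key

lemma sin_bound (s x : ℝ) (hs1 : 1/2 < s) (hs2 : s < 1)
    (hx1 : 2*s - 1 < x) (hx2 : x < s + 1/2) :
    Real.sin (Real.pi * (s - x)) < Real.sin (Real.pi * s) := by
  have hπ := Real.pi_pos
  set t : ℝ := x - (2*s - 1) with ht
  have ht0 : 0 < t := by simp [ht]; linarith
  have ht1 : t < 1 := by simp [ht]; linarith
  have key : Real.pi * (s - x) = Real.pi * (1 - s) - Real.pi * t := by rw [ht]; ring
  rw [key, Real.sin_sub]
  have hsin_a : Real.sin (Real.pi * (1-s)) = Real.sin (Real.pi * s) := by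
    rw [show Real.pi * (1-s) = Real.pi - Real.pi * s by ring, Real.sin_pi_sub]
  rw [hsin_a]
  have hsins : 0 < Real.sin (Real.pi * s) :=
    Real.sin_pos_of_pos_of_lt_pi (by nlinarith) (by nlinarith)
  have hcos_a : 0 < Real.cos (Real.pi * (1-s)) := by
    apply Real.cos_pos_of_mem_Ioo
    constructor <;> nlinarith
  have hsint : 0 < Real.sin (Real.pi * t) :=
    Real.sin_pos_of_pos_of_lt_pi (by nlinarith) (by nlinarith)
  have hcost : Real.cos (Real.pi * t) ≤ 1 := Real.cos_le_one _
  nlinarith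

lemma gReal_pos (s x : ℝ) (hs1 : 1/2 < s) (hs2 : s < 1)
    (hx1 : 2*s - 1 < x) (hx2 : x < s + 1/2) :
    Real.sin (Real.pi * (s - x)) / Real.sin (Real.pi * s) <
      Real.Gamma (2*s - x) * Real.Gamma (x+1) / Real.Gamma (2*s) := by
  have hsins : 0 < Real.sin (Real.pi * s) :=
    Real.sin_pos_of_pos_of_lt_pi (by nlinarith [Real.pi_pos]) (by nlinarith [Real.pi_pos])
  have hg1 : 0 < Real.Gamma (2*s) := Real.Gamma_pos_of_pos (by linarith)
  have h1 : Real.sin (Real.pi * (s - x)) / Real.sin (Real.pi * s) < 1 :=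
    (div_lt_one hsins).mpr (sin_bound s x hs1 hs2 hx1 hx2)
  have h2 : (1:ℝ) ≤ Real.Gamma (2*s - x) * Real.Gamma (x+1) / Real.Gamma (2*s) :=
    (one_le_div hg1).mpr (gamma_prod_ge s x hs1 hs2 hx1 hx2)
  linarith

lemma gFun_ofReal (s x : ℝ) :
    gFun s (x : ℂ) = ((Real.Gamma (2*s - x) * Real.Gamma (x+1) / Real.Gamma (2*s) -
      Real.sin (Real.pi * (s - x)) / Real.sin (Real.pi * s) : ℝ) : ℂ) := by
  unfold gFun
  rw [show (2 * (s:ℂ) - (x:ℂ)) = ((2*s - x : ℝ) : ℂ) by push_cast; ring,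
    show ((x:ℂ) + 1) = ((x + 1 : ℝ) : ℂ) by push_cast; ring,
    show (2 * (s:ℂ)) = ((2*s : ℝ) : ℂ) by push_cast; ring,
    show ((Real.pi : ℂ) * ((s:ℂ) - (x:ℂ))) = ((Real.pi * (s - x) : ℝ) : ℂ) by push_cast; ring,
    show ((Real.pi : ℂ) * (s:ℂ)) = ((Real.pi * s : ℝ) : ℂ) by push_cast; ring,
    Complex.Gamma_ofReal, Complex.Gamma_ofReal, Complex.Gamma_ofReal,
    ← Complex.ofReal_sin, ← Complex.ofReal_sin]
  push_cast
  ring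

lemma gFun_analyticAt (s : ℝ) {z : ℂ} (h1 : -1 < z.re) (h2 : z.re < 2 * s) :
    AnalyticAt ℂ (gFun s) z := by
  set U : Set ℂ := {w : ℂ | -1 < w.re ∧ w.re < 2 * s} with hU
  have hUopen : IsOpen U := by
    apply IsOpen.inter
    · exact isOpen_lt continuous_const Complex.continuous_re
    · exact isOpen_lt Complex.continuous_re continuous_const
  have hdiff : DifferentiableOn ℂ (gFun s) U := by
    intro w hw
    obtain ⟨hw1, hw2⟩ := hw
    apply DifferentiableAt.differentiableWithinAt
    have hG1 : DifferentiableAt ℂ (fun z : ℂ => Complex.Gamma (2 * s - z)) w := by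
      apply DifferentiableAt.comp
      · apply Complex.differentiableAt_Gamma
        intro m hm
        have : (2 * (s:ℂ) - w).re = 2*s - w.re := by simp
        rw [hm] at this
        simp at this
        have : (0:ℝ) ≤ (m:ℝ) := Nat.cast_nonneg m
        linarith [this]
      · fun_prop
    have hG2 : DifferentiableAt ℂ (fun z : ℂ => Complex.Gamma (z + 1)) w := by
      apply DifferentiableAt.comp
      · apply Complex.differentiableAt_Gamma
        intro m hm
        have h : (w + 1).re = w.re + 1 := by simp
        rw [hm] at h
        simp at h
        have : (0:ℝ) ≤ (m:ℝ) := Nat.cast_nonneg m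
        linarith
      · fun_prop
    apply DifferentiableAt.sub
    · exact (hG1.mul hG2).div_const _
    · apply DifferentiableAt.div_const
      exact (Complex.differentiable_sin.comp (by fun_prop :
        Differentiable ℂ (fun x : ℂ => (Real.pi : ℂ) * ((s:ℂ) - x)))).differentiableAt
  exact hdiff.analyticAt (hUopen.mem_nhds ⟨h1, h2⟩)

theorem gFun_no_zeros_high_s (s : ℝ) (hs : s ∈ Set.Ioo (1/2 : ℝ) 1) :
    ∃ M > 0, ∀ z : ℂ, z.re ∈ Set.Ioo (2 * s - 1) (s + 1/2) →
      z.im ∈ Set.Icc (0 : ℝ) M → gFun s z ≠ 0 := by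
  obtain ⟨hs1, hs2⟩ := hs
  by_contra hcon
  push_neg at hcon
  have hM : ∀ n : ℕ, ∃ z : ℂ, z.re ∈ Set.Ioo (2*s-1) (s+1/2) ∧
      z.im ∈ Set.Icc (0:ℝ) (1/(n+1)) ∧ gFun s z = 0 := by
    intro n
    obtain ⟨z, hz1, hz2, hz3⟩ := hcon (1/(n+1)) (by positivity)
    exact ⟨z, hz1, hz2, hz3⟩
  choose u hu1 hu2 hu3 using hM
  have hreal : ∀ x : ℝ, x ∈ Set.Ioo (2*s-1) (s+1/2) → gFun s (x:ℂ) ≠ 0 := by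
    intro x hx
    rw [gFun_ofReal, Complex.ofReal_ne_zero]
    have := gReal_pos s x hs1 hs2 hx.1 hx.2
    intro h
    rw [sub_eq_zero] at h
    exact this.ne' h
  have him : ∀ n, 0 < (u n).im := by
    intro n
    rcases lt_or_eq_of_le (hu2 n).1 with h | h
    · exact h
    · exfalso
      have heq : u n = (((u n).re : ℝ) : ℂ) := Complex.ext (by simp) (by simp [← h])
      exact hreal _ (hu1 n) (heq ▸ hu3 n)
  set K : Set ℂ := {z : ℂ | z.re ∈ Set.Icc (2*s-1) (s+1/2) ∧ z.im ∈ Set.Icc (0:ℝ) 1} with hK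
  have hKclosed : IsClosed K :=
    IsClosed.inter (isClosed_Icc.preimage Complex.continuous_re)
      (isClosed_Icc.preimage Complex.continuous_im)
  have hKbdd : Bornology.IsBounded K := by
    apply (Metric.isBounded_closedBall (x := (0:ℂ)) (r := 3)).subset
    intro z hz
    obtain ⟨⟨h1, h2⟩, h3, h4⟩ := hz
    rw [Metric.mem_closedBall, Complex.dist_eq, sub_zero]
    calc ‖z‖ ≤ |z.re| + |z.im| := Complex.norm_le_abs_re_add_abs_im z
      _ ≤ 3 := by
        rw [abs_of_nonneg (by linarith), abs_of_nonneg h3]; linarith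
  have hKcomp : IsCompact K := Metric.isCompact_of_isClosed_isBounded hKclosed hKbdd
  have huK : ∀ n, u n ∈ K := by
    intro n
    refine ⟨⟨(hu1 n).1.le, (hu1 n).2.le⟩, (hu2 n).1, le_trans (hu2 n).2 ?_⟩
    rw [div_le_one (by positivity)]
    linarith [Nat.cast_nonneg (α := ℝ) n]
  obtain ⟨z₀, hz₀K, φ, hφ, hlim⟩ := hKcomp.tendsto_subseq huK
  obtain ⟨⟨hre1, hre2⟩, _⟩ := hz₀K
  have him0 : z₀.im = 0 := by
    have t1 : Tendsto (fun n => (u (φ n)).im) atTop (𝓝 z₀.im) :=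
      (Complex.continuous_im.tendsto z₀).comp hlim
    have t3 : Tendsto (fun n : ℕ => 1 / ((φ n : ℝ) + 1)) atTop (𝓝 0) :=
      tendsto_one_div_add_atTop_nhds_zero_nat.comp hφ.tendsto_atTop
    have t2 : Tendsto (fun n => (u (φ n)).im) atTop (𝓝 0) :=
      tendsto_of_tendsto_of_tendsto_of_le_of_le tendsto_const_nhds t3
        (fun n => (hu2 (φ n)).1) (fun n => (hu2 (φ n)).2)
    exact tendsto_nhds_unique t1 t2
  have hne : ∀ n, u (φ n) ≠ z₀ := by
    intro n h
    have := him (φ n)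
    rw [h, him0] at this
    exact lt_irrefl 0 this
  have htend' : Tendsto (u ∘ φ) atTop (𝓝[≠] z₀) :=
    tendsto_nhdsWithin_of_tendsto_nhds_of_eventually_within _ hlim
      (Filter.Eventually.of_forall fun n => hne n)
  have hfreq : ∃ᶠ z in 𝓝[≠] z₀, gFun s z = 0 :=
    htend'.frequently (Filter.Frequently.of_forall fun n => hu3 (φ n))
  have hana : AnalyticAt ℂ (gFun s) z₀ :=
    gFun_analyticAt s (by linarith) (by linarith)
  have hev : ∀ᶠ z in 𝓝 z₀, gFun s z = 0 :=
    hana.frequently_zero_iff_eventually_zero.mp hfreq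
  rw [Metric.eventually_nhds_iff] at hev
  obtain ⟨δ, hδ, hball⟩ := hev
  have hlt : max (2*s-1) (z₀.re - δ) < min (s+1/2) (z₀.re + δ) := by
    simp only [max_lt_iff, lt_min_iff]
    refine ⟨⟨by linarith, by linarith⟩, by linarith, by linarith⟩
  obtain ⟨x, hx1, hx2⟩ := Set.nonempty_Ioo.mpr hlt
  have hxI : x ∈ Set.Ioo (2*s-1) (s+1/2) :=
    ⟨lt_of_le_of_lt (le_max_left _ _) hx1, lt_of_lt_of_le hx2 (min_le_left _ _)⟩
  have hxd1 : z₀.re - δ < x := lt_of_le_of_lt (le_max_right _ _) hx1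
  have hxd2 : x < z₀.re + δ := lt_of_lt_of_le hx2 (min_le_right _ _)
  have hdist : dist ((x:ℝ) : ℂ) z₀ < δ := by
    rw [show z₀ = ((z₀.re : ℝ) : ℂ) from Complex.ext (by simp) (by simp [him0]),
      Complex.isometry_ofReal.dist_eq, Real.dist_eq, abs_sub_lt_iff]
    constructor <;> linarith
  exact hreal x hxI (hball hdist)
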